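/- There is no constant C > 0 such that |μ₁(g)| ≤ C·(‖Pg‖²_{L²(0,1)} + |μ₀(g)|²)^{1/2} holds for all g ∈ L²((0,1),ℂ); i.e., the first-moment functional μ₁ is unbounded with respect to the H⁻¹(T)-type norm on L²(0,1). -/

import Mathlib

open MeasureTheory intervalIntegral

/-- `𝓘g(x) = ∫₀ˣ g(y) dy` -/
noncomputable def Iprim (g : ℝ → ℂ) (x : ℝ) : ℂ := ∫ y in (0:ℝ)..x, g y

/-- `Pg(x) = 𝓘g(x) − ∫₀¹ 𝓘g(z) dz` -/
noncomputable def Pfun (g : ℝ → ℂ) (x : ℝ) : ℂ := Iprim g x - ∫ z in (0:ℝ)..1, Iprim g z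

/-- `μ₀(g) = ∫₀¹ g(x) dx` -/
noncomputable def mu0 (g : ℝ → ℂ) : ℂ := ∫ x in (0:ℝ)..1, g x

/-- `μ₁(g) = ∫₀¹ (1−x) g(x) dx` -/
noncomputable def mu1 (g : ℝ → ℂ) : ℂ := ∫ x in (0:ℝ)..1, ((1 - x : ℝ) : ℂ) * g x


noncomputable def Gf (n : ℕ) : ℝ → ℝ := fun y => n*(1-y)^(n-1) - n*y^(n-1)

lemma contG (n : ℕ) : Continuous (Gf n) := by unfold Gf; fun_prop

lemma hasDerivH (n : ℕ) (x : ℝ) :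
    HasDerivAt (fun y : ℝ => 1 - y^n - (1-y)^n) (Gf n x) x := by
  have h1 := hasDerivAt_pow n x
  have h2 : HasDerivAt (fun y : ℝ => (1-y)^n) ((n:ℝ) * (1-x)^(n-1) * (-1)) x := by
    simpa using (((hasDerivAt_id x).const_sub 1).fun_pow n)
  have h := ((hasDerivAt_const x (1:ℝ)).sub h1).sub h2
  refine h.congr_deriv ?_
  unfold Gf; ring

lemma primG (n : ℕ) (x : ℝ) :
    (∫ y in (0:ℝ)..x, Gf n y) = 1 - x^n - (1-x)^n - (1 - 0^n - (1-0)^n) := by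
  exact intervalIntegral.integral_eq_sub_of_hasDerivAt (fun y _ => hasDerivH n y)
    ((contG n).intervalIntegrable 0 x)

lemma primG' (n : ℕ) (hn : 1 ≤ n) (x : ℝ) :
    (∫ y in (0:ℝ)..x, Gf n y) = 1 - x^n - (1-x)^n := by
  rw [primG n x, zero_pow (by omega)]; norm_num

lemma meanH (n : ℕ) (hn : 1 ≤ n) :
    (∫ x in (0:ℝ)..1, (1 - x^n - (1-x)^n)) = 1 - 2/((n:ℝ)+1) := by
  have hd : ∀ x ∈ Set.uIcc (0:ℝ) 1, HasDerivAt
      (fun y : ℝ => y - y^(n+1)/((n:ℝ)+1) + (1-y)^(n+1)/((n:ℝ)+1))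
      (1 - x^n - (1-x)^n) x := by
    intro x _
    have h1 := hasDerivAt_pow (n+1) x
    have h2 : HasDerivAt (fun y : ℝ => (1-y)^(n+1)) (((n:ℝ)+1) * (1-x)^n * (-1)) x := by
      simpa using (((hasDerivAt_id x).const_sub 1).fun_pow (n+1))
    have h := ((hasDerivAt_id x).sub (h1.div_const ((n:ℝ)+1))).add (h2.div_const ((n:ℝ)+1))
    refine h.congr_deriv ?_
    have hne : (n:ℝ)+1 ≠ 0 := by positivity
    simp only [Nat.add_sub_cancel]
    push_cast
    field_simp
    ring
  rw [intervalIntegral.integral_eq_sub_of_hasDerivAt hd (Continuous.intervalIntegrable (by fun_prop) 0 1)]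
  have hne : (n:ℝ)+1 ≠ 0 := by positivity
  field_simp
  ring

lemma mu1G (n : ℕ) (hn : 1 ≤ n) :
    (∫ x in (0:ℝ)..1, (1-x) * Gf n x) = ((n:ℝ)-1)/((n:ℝ)+1) := by
  obtain ⟨m, rfl⟩ : ∃ m, n = m + 1 := ⟨n-1, by omega⟩
  have hd : ∀ x ∈ Set.uIcc (0:ℝ) 1, HasDerivAt
      (fun y : ℝ => (-(((m:ℝ)+1)/((m:ℝ)+2)))*(1-y)^(m+2) - y^(m+1)
        + (((m:ℝ)+1)/((m:ℝ)+2))*y^(m+2))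
      ((1-x) * Gf (m+1) x) x := by
    intro x _
    have h1 := hasDerivAt_pow (m+1) x
    have h3 := hasDerivAt_pow (m+2) x
    have h2 : HasDerivAt (fun y : ℝ => (1-y)^(m+2)) (((m:ℝ)+2) * (1-x)^(m+1) * (-1)) x := by
      simpa using (((hasDerivAt_id x).const_sub 1).fun_pow (m+2))
    have h := ((h2.const_mul (-(((m:ℝ)+1)/((m:ℝ)+2)))).sub h1).add
      (h3.const_mul (((m:ℝ)+1)/((m:ℝ)+2)))
    refine h.congr_deriv ?_
    unfold Gf
    have hne : (m:ℝ)+2 ≠ 0 := by positivity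
    simp only [Nat.add_sub_cancel]
    push_cast
    field_simp
    ring
  rw [intervalIntegral.integral_eq_sub_of_hasDerivAt hd
    (Continuous.intervalIntegrable (by unfold Gf; fun_prop) 0 1)]
  have hne : (m:ℝ)+2 ≠ 0 := by positivity
  push_cast
  field_simp
  ring

lemma intBound (n : ℕ) (hn : 1 ≤ n) :
    (∫ x in (0:ℝ)..1, (2/((n:ℝ)+1) + x^n + (1-x)^n)) = 4/((n:ℝ)+1) := by
  have hd : ∀ x ∈ Set.uIcc (0:ℝ) 1, HasDerivAt
      (fun y : ℝ => 2/((n:ℝ)+1) * y + y^(n+1)/((n:ℝ)+1) - (1-y)^(n+1)/((n:ℝ)+1))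
      (2/((n:ℝ)+1) + x^n + (1-x)^n) x := by
    intro x _
    have h1 := hasDerivAt_pow (n+1) x
    have h2 : HasDerivAt (fun y : ℝ => (1-y)^(n+1)) (((n:ℝ)+1) * (1-x)^n * (-1)) x := by
      simpa using (((hasDerivAt_id x).const_sub 1).fun_pow (n+1))
    have h := (((hasDerivAt_id x).const_mul (2/((n:ℝ)+1))).add
      (h1.div_const ((n:ℝ)+1))).sub (h2.div_const ((n:ℝ)+1))
    refine h.congr_deriv ?_
    have hne : (n:ℝ)+1 ≠ 0 := by positivity
    push_cast
    field_simp
    ring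
  rw [intervalIntegral.integral_eq_sub_of_hasDerivAt hd
    (Continuous.intervalIntegrable (by fun_prop) 0 1)]
  have hne : (n:ℝ)+1 ≠ 0 := by positivity
  field_simp
  ring

lemma pointBound (n : ℕ) (hn : 2 ≤ n) (x : ℝ) (hx : x ∈ Set.Icc (0:ℝ) 1) :
    (1 - x^n - (1-x)^n - (1 - 2/((n:ℝ)+1)))^2 ≤ 2/((n:ℝ)+1) + x^n + (1-x)^n := by
  obtain ⟨hx0, hx1⟩ := hx
  set t : ℝ := 2/((n:ℝ)+1) with ht
  have ht0 : 0 ≤ t := by positivity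
  have ht1 : t ≤ 1 := by
    rw [ht, div_le_one (by positivity)]
    have : (2:ℝ) ≤ (n:ℝ) := by exact_mod_cast hn
    linarith
  have hu1 : x^n ≤ x := pow_le_of_le_one hx0 hx1 (by omega)
  have hu2 : (1-x)^n ≤ 1-x := pow_le_of_le_one (by linarith) (by linarith) (by omega)
  have hu0a : 0 ≤ x^n := by positivity
  have hu0b : 0 ≤ (1-x)^n := pow_nonneg (by linarith) n
  set u : ℝ := x^n + (1-x)^n with hu
  have hu0 : 0 ≤ u := by rw [hu]; linarith
  have huL : u ≤ 1 := by rw [hu]; linarith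
  have heq : 1 - x^n - (1-x)^n - (1 - t) = t - u := by rw [hu]; ring
  rw [heq]
  nlinarith [mul_nonneg ht0 hu0, sq_nonneg (t-u)]

theorem stmt4 :
    ¬ ∃ C : ℝ, 0 < C ∧
      ∀ g : ℝ → ℂ, MemLp g 2 (volume.restrict (Set.Ioo (0:ℝ) 1)) →
        ‖mu1 g‖ ≤ C * ((∫ x in (0:ℝ)..1, ‖Pfun g x‖ ^ 2) + ‖mu0 g‖ ^ 2) ^ ((1:ℝ)/2) := by
  rintro ⟨C, hC, hb⟩
  set n : ℕ := ⌈36*C^2⌉₊ + 2 with hn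
  have hn2 : 2 ≤ n := by omega
  have hn1 : 1 ≤ n := by omega
  have hnR : (2:ℝ) ≤ (n:ℝ) := by exact_mod_cast hn2
  set g : ℝ → ℂ := fun y => ((Gf n y : ℝ) : ℂ) with hg
  -- membership in L²
  have hmem : MemLp g 2 (volume.restrict (Set.Ioo (0:ℝ) 1)) := by
    haveI : IsFiniteMeasure (volume.restrict (Set.Ioo (0:ℝ) 1)) := by
      constructor
      rw [Measure.restrict_apply_univ]
      simp [Real.volume_Ioo]
    refine MemLp.of_bound (Continuous.aestronglyMeasurable ?_) (2*(n:ℝ)) ?_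
    · exact Complex.continuous_ofReal.comp (contG n)
    · rw [ae_restrict_iff' measurableSet_Ioo]
      filter_upwards with y hy
      obtain ⟨h0, h1⟩ := hy
      have hn0 : (0:ℝ) ≤ (n:ℝ) := Nat.cast_nonneg n
      have p1 : (1-y)^(n-1) ≤ 1 := pow_le_one₀ (by linarith) (by linarith)
      have p2 : y^(n-1) ≤ 1 := pow_le_one₀ (by linarith) (by linarith)
      have p3 : (0:ℝ) ≤ (1-y)^(n-1) := pow_nonneg (by linarith) _
      have p4 : (0:ℝ) ≤ y^(n-1) := pow_nonneg (by linarith) _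
      show ‖((Gf n y : ℝ) : ℂ)‖ ≤ 2*(n:ℝ)
      rw [Complex.norm_real]
      have hGf : Gf n y = n*(1-y)^(n-1) - n*y^(n-1) := rfl
      rw [hGf, Real.norm_eq_abs, abs_le]
      constructor
      · nlinarith
      · nlinarith
  -- primitive of g
  have hIprim : ∀ x : ℝ, Iprim g x = ((1 - x^n - (1-x)^n : ℝ) : ℂ) := by
    intro x
    unfold Iprim
    rw [hg]
    rw [intervalIntegral.integral_ofReal, primG' n hn1 x]
  have hmean : (∫ z in (0:ℝ)..1, Iprim g z) = ((1 - 2/((n:ℝ)+1) : ℝ) : ℂ) := by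
    simp_rw [hIprim]
    rw [intervalIntegral.integral_ofReal, meanH n hn1]
  have hP : ∀ x : ℝ, Pfun g x = ((1 - x^n - (1-x)^n - (1 - 2/((n:ℝ)+1)) : ℝ) : ℂ) := by
    intro x
    unfold Pfun
    rw [hIprim, hmean]
    push_cast
    ring
  -- mu0 g = 0
  have hmu0 : mu0 g = 0 := by
    unfold mu0
    rw [hg]
    rw [intervalIntegral.integral_ofReal, primG' n hn1 1]
    norm_num [zero_pow (show n ≠ 0 by omega)]
  -- mu1 g
  have hmu1 : ‖mu1 g‖ = ((n:ℝ)-1)/((n:ℝ)+1) := by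
    unfold mu1
    have hcongr : ∀ x : ℝ, ((1 - x : ℝ) : ℂ) * g x = (((1-x) * Gf n x : ℝ) : ℂ) := by
      intro x; rw [hg]; push_cast; ring
    simp_rw [hcongr]
    rw [intervalIntegral.integral_ofReal, mu1G n hn1, Complex.norm_real, Real.norm_eq_abs]
    exact abs_of_nonneg (div_nonneg (by linarith) (by linarith))
  -- bound on the P integral
  have hI : (∫ x in (0:ℝ)..1, ‖Pfun g x‖^2) ≤ 4/((n:ℝ)+1) := by
    have heq : (∫ x in (0:ℝ)..1, ‖Pfun g x‖^2)
        = ∫ x in (0:ℝ)..1, (1 - x^n - (1-x)^n - (1 - 2/((n:ℝ)+1)))^2 := by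
      apply intervalIntegral.integral_congr
      intro x _
      simp only [hP x, Complex.norm_real, Real.norm_eq_abs, sq_abs]
    rw [heq, ← intBound n hn1]
    apply intervalIntegral.integral_mono_on (by norm_num)
      (Continuous.intervalIntegrable (by fun_prop) 0 1)
      (Continuous.intervalIntegrable (by fun_prop) 0 1)
    intro x hx
    exact pointBound n hn2 x hx
  have hInn : 0 ≤ (∫ x in (0:ℝ)..1, ‖Pfun g x‖^2) := by
    apply intervalIntegral.integral_nonneg (by norm_num)
    intro x _
    positivity
  -- the inequality from the assumption
  have hb' := hb g hmem
  rw [hmu0, hmu1] at hb'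
  simp only [norm_zero] at hb'
  have hzero : (0:ℝ)^2 = 0 := by norm_num
  rw [hzero, add_zero] at hb'
  -- numeric contradiction
  have hceil : 36*C^2 ≤ ((⌈36*C^2⌉₊ : ℕ) : ℝ) := Nat.le_ceil _
  have hn36 : 36*C^2 < (n:ℝ)+1 := by
    have : (n:ℝ) = ((⌈36*C^2⌉₊ : ℕ) : ℝ) + 2 := by rw [hn]; push_cast; ring
    linarith
  have hsqlt : 4/((n:ℝ)+1) < (1/(3*C))^2 := by
    have h9 : (1/(3*C))^2 = 1/(9*C^2) := by field_simp; ring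
    rw [h9, div_lt_div_iff₀ (by linarith) (by positivity)]
    nlinarith
  have hrpow : ((∫ x in (0:ℝ)..1, ‖Pfun g x‖^2) : ℝ) ^ ((1:ℝ)/2) < 1/(3*C) := by
    rw [← Real.sqrt_eq_rpow]
    calc Real.sqrt (∫ x in (0:ℝ)..1, ‖Pfun g x‖^2)
        ≤ Real.sqrt (4/((n:ℝ)+1)) := Real.sqrt_le_sqrt hI
      _ < Real.sqrt ((1/(3*C))^2) := by
          apply Real.sqrt_lt_sqrt (by positivity) hsqlt
      _ = 1/(3*C) := Real.sqrt_sq (by positivity)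
  have hthird : (1:ℝ)/3 ≤ ((n:ℝ)-1)/((n:ℝ)+1) := by
    rw [div_le_div_iff₀ (by norm_num) (by linarith)]
    linarith
  have hfinal : ((n:ℝ)-1)/((n:ℝ)+1) < 1/3 := by
    calc ((n:ℝ)-1)/((n:ℝ)+1) ≤ C * ((∫ x in (0:ℝ)..1, ‖Pfun g x‖^2) ^ ((1:ℝ)/2)) := hb'
      _ < C * (1/(3*C)) := by
          apply mul_lt_mul_of_pos_left hrpow hC
      _ = 1/3 := by field_simp
  linarith
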